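/- Completeness is preserved by extrapolation: for every timed automaton A, every extrapolation operator extra, and every extra-saturated set N of symbolic states, for every (q, Z) in the set S of reachable symbolic states of A there exists (q, Z'') ∈ N with Z ⊆ Z''. In particular, for every reachable configuration (q,v) there is (q, Z'') ∈ N with v ∈ Z''. -/

import Mathlib

open Classical

namespace Timed

/-- A clock valuation assigns a nonnegative real to every clock. -/
abbrev Val (X : Type) := X → NNReal

/-- Time elapse on valuations: `(v+δ)(x) = v(x)+δ`. -/
noncomputable def addVal {X : Type} (v : Val X) (δ : NNReal) : Val X := fun x => v x + δ

/-- Reset of the clocks in `Y` to `0`. -/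
noncomputable def resetVal {X : Type} (Y : Set X) (v : Val X) : Val X :=
  fun x => if x ∈ Y then 0 else v x

/-- Comparison operators `<, ≤, =, ≥, >`. -/
inductive CmpOp | lt | le | eq | ge | gt

def CmpOp.holds : CmpOp → ℝ → ℝ → Prop
  | .lt, a, b => a < b
  | .le, a, b => a ≤ b
  | .eq, a, b => a = b
  | .ge, a, b => a ≥ b
  | .gt, a, b => a > b

/-- Clock constraints: finite conjunctions of `x ⋈ c` and `x - y ⋈ c` (and `true`). -/
inductive ClockConstraint (X : Type) where
  | tt : ClockConstraint X
  | single : X → CmpOp → ℤ → ClockConstraint X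
  | diag : X → X → CmpOp → ℤ → ClockConstraint X
  | conj : ClockConstraint X → ClockConstraint X → ClockConstraint X

def ClockConstraint.sat {X : Type} (v : Val X) : ClockConstraint X → Prop
  | .tt => True
  | .single x op c => op.holds (v x : ℝ) (c : ℝ)
  | .diag x y op c => op.holds ((v x : ℝ) - (v y : ℝ)) (c : ℝ)
  | .conj g₁ g₂ => g₁.sat v ∧ g₂.sat v

/-- `⟦g⟧`, the set of valuations satisfying `g`. -/
def sem {X : Type} (g : ClockConstraint X) : Set (Val X) := {v | g.sat v}

/-- A zone is a set of valuations definable by a clock constraint. -/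
def IsZone {X : Type} (Z : Set (Val X)) : Prop := ∃ g : ClockConstraint X, Z = sem g

/-- Future (time elapse) of a set of valuations. -/
def future {X : Type} (W : Set (Val X)) : Set (Val X) :=
  {w | ∃ v ∈ W, ∃ δ : NNReal, w = addVal v δ}

/-- Reset of a set of valuations: `[Y]W`. -/
def resetSet {X : Type} (Y : Set X) (W : Set (Val X)) : Set (Val X) :=
  resetVal Y '' W

/-- A timed automaton `(Q, X, q₀, T, F)`. -/
structure Automaton (Q X : Type) where
  init : Q
  trans : Set (Q × ClockConstraint X × Set X × Q)
  final : Set Q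

/-- `Post_t(W) = {v' : ∃ v ∈ W, ∃ δ ≥ 0, v ⊨ g ∧ v' = [Y]v + δ}` for `t = (q,g,Y,q')`. -/
def Post {Q X : Type} (t : Q × ClockConstraint X × Set X × Q) (W : Set (Val X)) :
    Set (Val X) :=
  {w | ∃ v ∈ W, ∃ δ : NNReal, t.2.1.sat v ∧ w = addVal (resetVal t.2.2.1 v) δ}

/-- The zero valuation. -/
def zeroVal (X : Type) : Val X := fun _ => 0

/-- One step of the semantics: a time elapse or a discrete transition. -/
inductive Step {Q X : Type} (A : Automaton Q X) : (Q × Val X) → (Q × Val X) → Prop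
  | delay (q : Q) (v : Val X) (δ : NNReal) : Step A (q, v) (q, addVal v δ)
  | disc {q : Q} {v : Val X} {g : ClockConstraint X} {R : Set X} {q₁ : Q}
      (ht : (q, g, R, q₁) ∈ A.trans) (hg : g.sat v) :
      Step A (q, v) (q₁, resetVal R v)

/-- A configuration is reachable if some finite run from `(q₀, 0)` ends in it. -/
def Reachable {Q X : Type} (A : Automaton Q X) (c : Q × Val X) : Prop :=
  Relation.ReflTransGen (Step A) (A.init, zeroVal X) c

/-- The initial zone `Z₀ = future {0}`. -/
def initZone (X : Type) : Set (Val X) := future {zeroVal X}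

/-- The set `S` of reachable symbolic states: least set containing `(q₀, Z₀)` and
closed under nonempty `Post`. -/
inductive SymbReach {Q X : Type} (A : Automaton Q X) : Q × Set (Val X) → Prop
  | init : SymbReach A (A.init, initZone X)
  | step {q : Q} {Z : Set (Val X)} {g : ClockConstraint X} {Y : Set X} {q' : Q}
      (h : SymbReach A (q, Z)) (ht : (q, g, Y, q') ∈ A.trans)
      (hne : Post (q, g, Y, q') Z ≠ ∅) :
      SymbReach A (q', Post (q, g, Y, q') Z)

/-- `N` is saturated w.r.t. the extrapolation operator `extra`. -/
def ExtraSaturated {Q X : Type} (A : Automaton Q X)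
    (extra : Q → Set (Val X) → Set (Val X)) (N : Set (Q × Set (Val X))) : Prop :=
  (∃ Z'', (A.init, Z'') ∈ N ∧ extra A.init (initZone X) ⊆ Z'') ∧
  ∀ q Z, (q, Z) ∈ N → ∀ g Y q', (q, g, Y, q') ∈ A.trans →
    Post (q, g, Y, q') Z ≠ ∅ →
    ∃ Z'', (q', Z'') ∈ N ∧ extra q' (Post (q, g, Y, q') Z) ⊆ Z''

/-- A `K`-bounded clock constraint: every `x ⋈ c` has `-K x ≤ c ≤ K x` and
every `x - y ⋈ c` has `-K y ≤ c ≤ K x`. -/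
def KBounded {X : Type} (K : X → ℕ) : ClockConstraint X → Prop
  | .tt => True
  | .single x _ c => -(K x : ℤ) ≤ c ∧ c ≤ (K x : ℤ)
  | .diag x y _ c => -(K y : ℤ) ≤ c ∧ c ≤ (K x : ℤ)
  | .conj g₁ g₂ => KBounded K g₁ ∧ KBounded K g₂

/-- A `K`-bounded zone. -/
def IsKBoundedZone {X : Type} (K : X → ℕ) (Z : Set (Val X)) : Prop :=
  ∃ g : ClockConstraint X, KBounded K g ∧ Z = sem g

/-- An `LU`-bounded clock constraint: every `x ⋈ c` has `-U x ≤ c ≤ L x` and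
every `x - y ⋈ c` has `-U y ≤ c ≤ L x`. -/
def LUBounded {X : Type} (L U : X → ℕ) : ClockConstraint X → Prop
  | .tt => True
  | .single x _ c => -(U x : ℤ) ≤ c ∧ c ≤ (L x : ℤ)
  | .diag x y _ c => -(U y : ℤ) ≤ c ∧ c ≤ (L x : ℤ)
  | .conj g₁ g₂ => LUBounded L U g₁ ∧ LUBounded L U g₂

/-- An `LU`-bounded zone. -/
def IsLUBoundedZone {X : Type} (L U : X → ℕ) (Z : Set (Val X)) : Prop :=
  ∃ g : ClockConstraint X, LUBounded L U g ∧ Z = sem g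

/-- A diagonal-free clock constraint. -/
def DiagFree {X : Type} : ClockConstraint X → Prop
  | .tt => True
  | .single _ _ _ => True
  | .diag _ _ _ _ => False
  | .conj g₁ g₂ => DiagFree g₁ ∧ DiagFree g₂

/-- Every atomic constraint `x ⋈ c` of the guard satisfies `c ≤ K x`. -/
def GuardKBounded {X : Type} (K : X → ℕ) : ClockConstraint X → Prop
  | .tt => True
  | .single x _ c => c ≤ (K x : ℤ)
  | .diag _ _ _ _ => True
  | .conj g₁ g₂ => GuardKBounded K g₁ ∧ GuardKBounded K g₂

/-- `LU`-boundedness of guards: `x < c`, `x ≤ c` need `c ≤ U x`; `x > d`, `x ≥ d`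
need `d ≤ L x`; `x = c` needs both. -/
def GuardLUBounded {X : Type} (L U : X → ℕ) : ClockConstraint X → Prop
  | .tt => True
  | .single x op c =>
      match op with
      | .lt => c ≤ (U x : ℤ)
      | .le => c ≤ (U x : ℤ)
      | .gt => c ≤ (L x : ℤ)
      | .ge => c ≤ (L x : ℤ)
      | .eq => c ≤ (U x : ℤ) ∧ c ≤ (L x : ℤ)
  | .diag _ _ _ _ => True
  | .conj g₁ g₂ => GuardLUBounded L U g₁ ∧ GuardLUBounded L U g₂

/-- A (strong timed) simulation: a preorder relating only configurations with the same
state, compatible with time elapses and discrete transitions. -/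
def IsSimulation {Q X : Type} (A : Automaton Q X)
    (R : (Q × Val X) → (Q × Val X) → Prop) : Prop :=
  (∀ c, R c c) ∧
  (∀ c₁ c₂ c₃, R c₁ c₂ → R c₂ c₃ → R c₁ c₃) ∧
  (∀ c c', R c c' → c.1 = c'.1) ∧
  (∀ q v v', R (q, v) (q, v') →
    (∀ δ : NNReal, R (q, addVal v δ) (q, addVal v' δ)) ∧
    (∀ g Y q₁, (q, g, Y, q₁) ∈ A.trans → g.sat v →
      g.sat v' ∧ R (q₁, resetVal Y v) (q₁, resetVal Y v')))

/-- Labels of run steps: a delay, or a discrete transition. -/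
inductive RunLabel (Q X : Type) where
  | delay : NNReal → RunLabel Q X
  | disc : Q × ClockConstraint X × Set X × Q → RunLabel Q X

/-- Finite runs with an explicit sequence of delays and transitions. -/
inductive LRun {Q X : Type} (A : Automaton Q X) :
    (Q × Val X) → List (RunLabel Q X) → (Q × Val X) → Prop
  | refl (c : Q × Val X) : LRun A c [] c
  | delay {q : Q} {v : Val X} (δ : NNReal) {l : List (RunLabel Q X)} {c' : Q × Val X}
      (h : LRun A (q, addVal v δ) l c') : LRun A (q, v) (RunLabel.delay δ :: l) c'
  | disc {q : Q} {v : Val X} {g : ClockConstraint X} {Y : Set X} {q₁ : Q}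
      {l : List (RunLabel Q X)} {c' : Q × Val X}
      (ht : (q, g, Y, q₁) ∈ A.trans) (hg : g.sat v)
      (h : LRun A (q₁, resetVal Y v) l c') :
      LRun A (q, v) (RunLabel.disc (q, g, Y, q₁) :: l) c'

/-- `N` is saturated w.r.t. the simulation `R`. -/
def SimSaturated {Q X : Type} (A : Automaton Q X)
    (R : (Q × Val X) → (Q × Val X) → Prop) (N : Set (Q × Set (Val X))) : Prop :=
  (∃ Z'', (A.init, Z'') ∈ N ∧ ∀ v ∈ initZone X, ∃ v' ∈ Z'', R (A.init, v) (A.init, v')) ∧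
  ∀ q Z, (q, Z) ∈ N → ∀ g Y q', (q, g, Y, q') ∈ A.trans →
    Post (q, g, Y, q') Z ≠ ∅ →
    ∃ Z'', (q', Z'') ∈ N ∧ ∀ v ∈ Post (q, g, Y, q') Z, ∃ v' ∈ Z'', R (q', v) (q', v')

/-- Atomic constraints, allowing the zero clock `x₀` on the left of a difference. -/
inductive Atom (X : Type) where
  | single : X → CmpOp → ℤ → Atom X
  | negSingle : X → CmpOp → ℤ → Atom X    -- `x₀ - y ⋈ c`
  | diag : X → X → CmpOp → ℤ → Atom X

def Atom.sat {X : Type} (v : Val X) : Atom X → Prop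
  | .single x op c => op.holds (v x : ℝ) (c : ℝ)
  | .negSingle y op c => op.holds (-(v y : ℝ)) (c : ℝ)
  | .diag x y op c => op.holds ((v x : ℝ) - (v y : ℝ)) (c : ℝ)

/-- `pre(φ, Y)` of an atomic constraint w.r.t. a reset set `Y`. -/
noncomputable def preAtom {X : Type} (Y : Set X) : Atom X → Set (Atom X)
  | .single x op c => if x ∈ Y then ∅ else {Atom.single x op c}
  | .negSingle y op c => if y ∈ Y then ∅ else {Atom.negSingle y op c}
  | .diag x y op c =>
      if x ∈ Y then (if y ∈ Y then ∅ else {Atom.negSingle y op c})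
      else (if y ∈ Y then {Atom.single x op c} else {Atom.diag x y op c})

/-- The set of atomic constraints of a guard. -/
def atomsOf {X : Type} : ClockConstraint X → Set (Atom X)
  | .tt => ∅
  | .single x op c => {Atom.single x op c}
  | .diag x y op c => {Atom.diag x y op c}
  | .conj g₁ g₂ => atomsOf g₁ ∪ atomsOf g₂

/-- One step of the fixpoint equations defining the constraint map `G`. -/
noncomputable def cmapStep {Q X : Type} (A : Automaton Q X)
    (G : Q → Set (Atom X)) (q : Q) : Set (Atom X) :=
  {φ | ∃ g Y q', (q, g, Y, q') ∈ A.trans ∧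
        (φ ∈ atomsOf g ∨ ∃ ψ ∈ G q', φ ∈ preAtom Y ψ)}

/-- The `G`-preorder: `(q,v) ≼_G (q,v')` iff for all `δ` and all `φ ∈ G q`,
`v+δ ⊨ φ` implies `v'+δ ⊨ φ` (only configurations with the same state are related). -/
def GPre {Q X : Type} (G : Q → Set (Atom X)) (c c' : Q × Val X) : Prop :=
  c.1 = c'.1 ∧
  ∀ δ : NNReal, ∀ φ ∈ G c.1, Atom.sat (addVal c.2 δ) φ → Atom.sat (addVal c'.2 δ) φ

end Timed
open Timed


namespace ZP

abbrev DA (V : Type) := Option V × Option V × Bool × ℤ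

def ev {V : Type} (w : V → ℝ) : Option V → ℝ
  | none => 0
  | some x => w x

def dsat {V : Type} (w : V → ℝ) (d : DA V) : Prop :=
  if d.2.2.1 then ev w d.1 - ev w d.2.1 < (d.2.2.2 : ℝ)
  else ev w d.1 - ev w d.2.1 ≤ (d.2.2.2 : ℝ)

def dsats {V : Type} (w : V → ℝ) (L : List (DA V)) : Prop := ∀ d ∈ L, dsat w d

lemma dsats_append {V : Type} {w : V → ℝ} {L₁ L₂ : List (DA V)} :
    dsats w (L₁ ++ L₂) ↔ dsats w L₁ ∧ dsats w L₂ := by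
  simp [dsats, List.mem_append, or_imp, forall_and]

lemma find_between (lows ups : List (ℝ × Bool))
    (h : ∀ l ∈ lows, ∀ u ∈ ups, if l.2 || u.2 then l.1 < u.1 else l.1 ≤ u.1) :
    ∃ r : ℝ, (∀ l ∈ lows, if l.2 then l.1 < r else l.1 ≤ r) ∧
             (∀ u ∈ ups, if u.2 then r < u.1 else r ≤ u.1) := by
  rcases List.eq_nil_or_concat lows with hl | hl
  · subst hl
    rcases List.eq_nil_or_concat ups with hu | hu
    · subst hu; exact ⟨0, by simp, by simp⟩
    · -- lows empty, ups nonempty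
      have hne : ups ≠ [] := by rcases hu with ⟨a, b, rfl⟩; simp
      have hSne : (ups.map Prod.fst).toFinset.Nonempty := by
        simp [List.toFinset_nonempty_iff, hne]
      set M := (ups.map Prod.fst).toFinset.min' hSne with hM
      refine ⟨M - 1, by simp, ?_⟩
      intro u hu'
      have : M ≤ u.1 := Finset.min'_le _ _ (by rw [List.mem_toFinset, List.mem_map]; exact ⟨u, hu', rfl⟩)
      split <;> linarith
  · have hlne : lows ≠ [] := by rcases hl with ⟨a, b, rfl⟩; simp
    have hLne : (lows.map Prod.fst).toFinset.Nonempty := by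
      simp [List.toFinset_nonempty_iff, hlne]
    set m := (lows.map Prod.fst).toFinset.max' hLne with hm
    have hmmem : ∃ l ∈ lows, l.1 = m := by
      have := Finset.max'_mem (lows.map Prod.fst).toFinset hLne
      rw [List.mem_toFinset, List.mem_map] at this
      obtain ⟨l, hl1, hl2⟩ := this; exact ⟨l, hl1, hl2⟩
    have hmle : ∀ l ∈ lows, l.1 ≤ m := by
      intro l hl'; exact Finset.le_max' _ _ (by rw [List.mem_toFinset, List.mem_map]; exact ⟨l, hl', rfl⟩)
    rcases List.eq_nil_or_concat ups with hu | hu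
    · subst hu
      exact ⟨m + 1, by intro l hl'; have := hmle l hl'; split <;> linarith, by simp⟩
    · have hune : ups ≠ [] := by rcases hu with ⟨a, b, rfl⟩; simp
      have hUne : (ups.map Prod.fst).toFinset.Nonempty := by
        simp [List.toFinset_nonempty_iff, hune]
      set M := (ups.map Prod.fst).toFinset.min' hUne with hM
      have hMmem : ∃ u ∈ ups, u.1 = M := by
        have := Finset.min'_mem (ups.map Prod.fst).toFinset hUne
        rw [List.mem_toFinset, List.mem_map] at this
        obtain ⟨u, hu1, hu2⟩ := this; exact ⟨u, hu1, hu2⟩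
      have hMle : ∀ u ∈ ups, M ≤ u.1 := by
        intro u hu'; exact Finset.min'_le _ _ (by rw [List.mem_toFinset, List.mem_map]; exact ⟨u, hu', rfl⟩)
      obtain ⟨l₀, hl₀, hl₀m⟩ := hmmem
      obtain ⟨u₀, hu₀, hu₀M⟩ := hMmem
      have hmM : m ≤ M := by
        have := h l₀ hl₀ u₀ hu₀
        split at this <;> linarith [hl₀m, hu₀M]
      refine ⟨(m + M) / 2, ?_, ?_⟩
      · intro l hl'
        have h1 : l.1 ≤ m := hmle l hl'
        by_cases hs : l.2
        · have : l.1 < M := by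
            have := h l hl' u₀ hu₀
            rw [hs] at this; simp at this; linarith [hu₀M]
          simp [hs]; linarith
        · simp [hs]; linarith
      · intro u hu'
        have h1 : M ≤ u.1 := hMle u hu'
        by_cases hs : u.2
        · have : m < u.1 := by
            have := h l₀ hl₀ u hu'
            rw [hs] at this; simp at this; linarith [hl₀m]
          simp [hs]; linarith
        · simp [hs]; linarith


section Elim
variable {V : Type} [DecidableEq V]

def norm (z : V) (d : DA V) : DA V :=
  if d.1 = some z ∧ d.2.1 = some z then (none, none, d.2.2) else d

lemma dsat_norm (z : V) (w : V → ℝ) (d : DA V) : dsat w (norm z d) ↔ dsat w d := by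
  unfold norm
  split
  · rename_i h
    simp only [dsat, ev, h.1, h.2, sub_self]
  · rfl

lemma norm_not_both (z : V) (d : DA V) :
    ¬((norm z d).1 = some z ∧ (norm z d).2.1 = some z) := by
  unfold norm; split
  · simp
  · assumption

lemma dsats_map_norm {z : V} {w : V → ℝ} {L : List (DA V)} :
    dsats w (L.map (norm z)) ↔ dsats w L := by
  constructor
  · intro h d hd
    rw [← dsat_norm z]
    exact h _ (List.mem_map_of_mem hd)
  · intro h d hd
    obtain ⟨d₀, hd₀, rfl⟩ := List.mem_map.1 hd
    rw [dsat_norm]; exact h _ hd₀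

def elim (z : V) (L : List (DA V)) : List (DA V) :=
  (L.map (norm z)).filter (fun d => decide (d.1 ≠ some z) && decide (d.2.1 ≠ some z))
  ++ (L.map (norm z)).flatMap (fun d₁ => (L.map (norm z)).filterMap (fun d₂ =>
      if d₁.1 = some z ∧ d₁.2.1 ≠ some z ∧ d₂.2.1 = some z ∧ d₂.1 ≠ some z
      then some (d₂.1, d₁.2.1, d₁.2.2.1 || d₂.2.2.1, d₁.2.2.2 + d₂.2.2.2) else none))

def free (z : V) (d : DA V) : Prop := d.1 ≠ some z ∧ d.2.1 ≠ some z

lemma elim_free {z : V} {L : List (DA V)} {d : DA V} (hd : d ∈ elim z L) : free z d := by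
  rcases List.mem_append.1 hd with h | h
  · have := List.of_mem_filter h
    simp only [Bool.and_eq_true, decide_eq_true_eq] at this
    exact this
  · obtain ⟨d₁, _, h2⟩ := List.mem_flatMap.1 h
    obtain ⟨d₂, _, h3⟩ := List.mem_filterMap.1 h2
    split at h3
    · rename_i hc
      obtain rfl := Option.some_injective _ h3
      exact ⟨hc.2.2.2, hc.2.1⟩
    · simp at h3

lemma ev_update_ne {z : V} {w : V → ℝ} {r : ℝ} {b : Option V} (hb : b ≠ some z) :
    ev (Function.update w z r) b = ev w b := by
  cases b with
  | none => rfl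
  | some y =>
    have : y ≠ z := fun h => hb (by rw [h])
    simp [ev, Function.update_of_ne this]

lemma dsat_update_free {z : V} {w : V → ℝ} {r : ℝ} {d : DA V} (hd : free z d) :
    dsat (Function.update w z r) d ↔ dsat w d := by
  unfold dsat; rw [ev_update_ne hd.1, ev_update_ne hd.2]

lemma elim_correct (z : V) (L : List (DA V)) (w : V → ℝ) :
    dsats w (elim z L) ↔ ∃ r : ℝ, dsats (Function.update w z r) L := by
  constructor
  · intro h
    set lows : List (ℝ × Bool) := (L.map (norm z)).filterMap (fun d =>
      if d.2.1 = some z ∧ d.1 ≠ some z then some (ev w d.1 - (d.2.2.2 : ℝ), d.2.2.1) else none)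
      with hlows
    set ups : List (ℝ × Bool) := (L.map (norm z)).filterMap (fun d =>
      if d.1 = some z ∧ d.2.1 ≠ some z then some (ev w d.2.1 + (d.2.2.2 : ℝ), d.2.2.1) else none)
      with hups
    have hpair : ∀ l ∈ lows, ∀ u ∈ ups, if l.2 || u.2 then l.1 < u.1 else l.1 ≤ u.1 := by
      intro l hl u hu
      obtain ⟨d₂, hd₂, hd₂e⟩ := List.mem_filterMap.1 hl
      obtain ⟨d₁, hd₁, hd₁e⟩ := List.mem_filterMap.1 hu
      split at hd₂e; swap; · simp at hd₂e
      split at hd₁e; swap; · simp at hd₁e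
      rename_i hc₂ hc₁
      obtain rfl := Option.some_injective _ hd₂e
      obtain rfl := Option.some_injective _ hd₁e
      have hmem : (d₂.1, d₁.2.1, d₁.2.2.1 || d₂.2.2.1, d₁.2.2.2 + d₂.2.2.2) ∈ elim z L := by
        refine List.mem_append_right _ (List.mem_flatMap.2 ⟨d₁, hd₁, List.mem_filterMap.2
          ⟨d₂, hd₂, ?_⟩⟩)
        rw [if_pos ⟨hc₁.1, hc₁.2, hc₂.1, hc₂.2⟩]
      have hcomb := h _ hmem
      unfold dsat at hcomb
      simp only at hcomb ⊢
      cases hb₁ : d₁.2.2.1 <;> cases hb₂ : d₂.2.2.1 <;> rw [hb₁, hb₂] at hcomb <;>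
        simp at hcomb ⊢ <;> (try push_cast at hcomb) <;> linarith
    obtain ⟨r, hrl, hru⟩ := find_between lows ups hpair
    refine ⟨r, ?_⟩
    rw [← dsats_map_norm (z := z)]
    intro d hd
    by_cases c1 : d.1 = some z
    · by_cases c2 : d.2.1 = some z
      · obtain ⟨d₀, _, rfl⟩ := List.mem_map.1 hd
        exact absurd ⟨c1, c2⟩ (norm_not_both z d₀)
      · have humem : (ev w d.2.1 + (d.2.2.2 : ℝ), d.2.2.1) ∈ ups :=
          List.mem_filterMap.2 ⟨d, hd, by rw [if_pos ⟨c1, c2⟩]⟩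
        have hb := hru _ humem
        unfold dsat
        rw [c1]
        have he1 : ev (Function.update w z r) (some z) = r := by simp [ev]
        rw [he1, ev_update_ne c2]
        simp only at hb
        cases hs : d.2.2.1 <;> rw [hs] at hb <;> simp at hb ⊢ <;> linarith
    · by_cases c2 : d.2.1 = some z
      · have hlmem : (ev w d.1 - (d.2.2.2 : ℝ), d.2.2.1) ∈ lows :=
          List.mem_filterMap.2 ⟨d, hd, by rw [if_pos ⟨c2, c1⟩]⟩
        have hb := hrl _ hlmem
        unfold dsat
        rw [c2]
        have he1 : ev (Function.update w z r) (some z) = r := by simp [ev]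
        rw [he1, ev_update_ne c1]
        simp only at hb
        cases hs : d.2.2.1 <;> rw [hs] at hb <;> simp at hb ⊢ <;> linarith
      · have hfmem : d ∈ elim z L := by
          refine List.mem_append_left _ (List.mem_filter.2 ⟨hd, ?_⟩)
          simp [c1, c2]
        rw [dsat_update_free ⟨c1, c2⟩]
        exact h _ hfmem
  · rintro ⟨r, hr⟩
    have hr' : dsats (Function.update w z r) (L.map (norm z)) := dsats_map_norm.2 hr
    intro d hd
    rcases List.mem_append.1 hd with hmem | hmem
    · have hfil := List.mem_filter.1 hmem
      have hfree : free z d := by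
        have := hfil.2
        simp only [Bool.and_eq_true, decide_eq_true_eq] at this
        exact this
      rw [← dsat_update_free (r := r) hfree]
      exact hr' _ hfil.1
    · obtain ⟨d₁, hd₁, h2⟩ := List.mem_flatMap.1 hmem
      obtain ⟨d₂, hd₂, h3⟩ := List.mem_filterMap.1 h2
      split at h3; swap; · simp at h3
      rename_i hc
      obtain rfl := Option.some_injective _ h3
      have h₁ := hr' _ hd₁
      have h₂ := hr' _ hd₂
      unfold dsat at h₁ h₂ ⊢
      rw [hc.1] at h₁
      rw [hc.2.2.1] at h₂
      have he1 : ev (Function.update w z r) (some z) = r := by simp [ev]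
      rw [he1, ev_update_ne hc.2.1] at h₁
      rw [he1, ev_update_ne hc.2.2.2] at h₂
      simp only
      cases hb₁ : d₁.2.2.1 <;> cases hb₂ : d₂.2.2.1 <;> rw [hb₁] at h₁ <;> rw [hb₂] at h₂ <;>
        simp at h₁ h₂ ⊢ <;> (try push_cast) <;> linarith

end Elim


section Zones
open Timed
variable {X : Type} [DecidableEq X]

noncomputable def co (v : Val X) : X → ℝ := fun x => (v x : ℝ)

def semD (L : List (DA X)) : Set (Val X) := {v | dsats (co v) L}

def opToL (a b : Option X) (op : CmpOp) (c : ℤ) : List (DA X) :=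
  match op with
  | .lt => [(a, b, true, c)]
  | .le => [(a, b, false, c)]
  | .eq => [(a, b, false, c), (b, a, false, -c)]
  | .ge => [(b, a, false, -c)]
  | .gt => [(b, a, true, -c)]

lemma opToL_sat (w : X → ℝ) (a b : Option X) (op : CmpOp) (c : ℤ) :
    (∀ d ∈ opToL a b op c, dsat w d) ↔ op.holds (ev w a - ev w b) c := by
  cases op <;>
    simp [opToL, dsat, CmpOp.holds, ge_iff_le] <;> push_cast <;>
    constructor <;> intros <;> first | linarith | (constructor <;> linarith)

def ccToL : ClockConstraint X → List (DA X)
  | .tt => []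
  | .single x op c => opToL (some x) none op c
  | .diag x y op c => opToL (some x) (some y) op c
  | .conj g₁ g₂ => ccToL g₁ ++ ccToL g₂

lemma sem_eq_semD (g : ClockConstraint X) : sem g = semD (ccToL g) := by
  induction g with
  | tt => ext v; simp [sem, ClockConstraint.sat, semD, dsats, ccToL]
  | single x op c =>
    ext v
    show (ClockConstraint.single x op c).sat v ↔ dsats (co v) _
    show op.holds (v x : ℝ) (c : ℝ) ↔ _
    rw [show ((v x : ℝ)) = ev (co v) (some x) - ev (co v) none by simp [ev, co]]
    exact (opToL_sat _ _ _ _ _).symm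
  | diag x y op c =>
    ext v
    show op.holds ((v x : ℝ) - (v y : ℝ)) (c : ℝ) ↔ dsats (co v) _
    rw [show ((v x : ℝ) - (v y : ℝ)) = ev (co v) (some x) - ev (co v) (some y) by simp [ev, co]]
    exact (opToL_sat _ _ _ _ _).symm
  | conj g₁ g₂ ih₁ ih₂ =>
    ext v
    show (g₁.sat v ∧ g₂.sat v) ↔ dsats (co v) (_ ++ _)
    rw [show g₁.sat v ↔ v ∈ sem g₁ from Iff.rfl, show g₂.sat v ↔ v ∈ sem g₂ from Iff.rfl,
      ih₁, ih₂, dsats_append]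
    exact Iff.rfl

def atomCC : DA X → ClockConstraint X
  | (some x, some y, s, c) => .diag x y (if s then .lt else .le) c
  | (some x, none, s, c) => .single x (if s then .lt else .le) c
  | (none, some y, s, c) => .single y (if s then .gt else .ge) (-c)
  | (none, none, _, _) => .tt

def lToCC : List (DA X) → ClockConstraint X
  | [] => .tt
  | d :: L => .conj (atomCC d) (lToCC L)

lemma atomCC_sem {v₀ : Val X} {d : DA X} (h₀ : dsat (co v₀) d) (v : Val X) :
    (atomCC d).sat v ↔ dsat (co v) d := by
  obtain ⟨a, b, s, c⟩ := d
  cases a <;> cases b <;> cases s <;>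
    simp [atomCC, ClockConstraint.sat, CmpOp.holds, dsat, ev, co, ge_iff_le] at h₀ ⊢ <;>
    push_cast at h₀ ⊢ <;> first | exact h₀ | (constructor <;> intro h <;> linarith)

lemma lToCC_sem {v₀ : Val X} {L : List (DA X)} (h₀ : dsats (co v₀) L) :
    sem (lToCC L) = semD L := by
  induction L with
  | nil => ext v; simp [lToCC, sem, ClockConstraint.sat, semD, dsats]
  | cons d L ih =>
    have hd₀ : dsat (co v₀) d := h₀ d (List.mem_cons_self)
    have hL₀ : dsats (co v₀) L := fun e he => h₀ e (List.mem_cons_of_mem _ he)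
    ext v
    show ((atomCC d).sat v ∧ (lToCC L).sat v) ↔ dsats (co v) (d :: L)
    rw [atomCC_sem hd₀, show (lToCC L).sat v ↔ v ∈ sem (lToCC L) from Iff.rfl, ih hL₀]
    simp [semD, dsats, List.mem_cons, or_imp, forall_and, Set.mem_setOf_eq]

lemma isZone_semD {L : List (DA X)} (hne : semD L ≠ ∅) : IsZone (semD L) := by
  obtain ⟨v₀, hv₀⟩ := Set.nonempty_iff_ne_empty.2 hne
  exact ⟨lToCC L, (lToCC_sem hv₀).symm⟩

end Zones

section Ops
open Timed
variable {X : Type} [DecidableEq X]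

/-- shift an atom over `X` to an atom over `Option X` (with `none` playing the
role of the elapsed time `δ`). -/
def shiftA (d : DA X) : DA (Option X) := (some d.1, some d.2.1, d.2.2)

def unshiftA (d : DA (Option X)) : DA X := (d.1.join, d.2.1.join, d.2.2)

lemma dsat_shiftA (W : Option X → ℝ) (d : DA X) :
    dsat W (shiftA d) ↔ dsat (fun x => W (some x) - W none) d := by
  have h : ∀ a : Option X, ev W (some a) = ev (fun x => W (some x) - W none) a + W none := by
    intro a; cases a <;> simp [ev]
  unfold dsat shiftA
  simp only
  rw [h d.1, h d.2.1]
  rw [show ∀ A B : ℝ, (A + W none) - (B + W none) = A - B from fun A B => by ring]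

lemma dsats_map_shiftA (W : Option X → ℝ) (L : List (DA X)) :
    dsats W (L.map shiftA) ↔ dsats (fun x => W (some x) - W none) L := by
  constructor
  · intro h d hd; rw [← dsat_shiftA]; exact h _ (List.mem_map_of_mem hd)
  · intro h d hd; obtain ⟨d₀, h₀, rfl⟩ := List.mem_map.1 hd; rw [dsat_shiftA]; exact h _ h₀

lemma dsat_unshiftA (w : X → ℝ) (δ : ℝ) {d : DA (Option X)}
    (h1 : d.1 ≠ some none) (h2 : d.2.1 ≠ some none) :
    dsat (fun o => Option.elim o δ w) d ↔ dsat w (unshiftA d) := by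
  have h : ∀ a : Option (Option X), a ≠ some none →
      ev (fun o => Option.elim o δ w) a = ev w a.join := by
    intro a ha
    match a with
    | none => rfl
    | some none => exact absurd rfl ha
    | some (some x) => rfl
  unfold dsat unshiftA
  simp only
  rw [h d.1 h1, h d.2.1 h2]

lemma dsats_unshift (w : X → ℝ) (δ : ℝ) {M : List (DA (Option X))}
    (hM : ∀ d ∈ M, d.1 ≠ some none ∧ d.2.1 ≠ some none) :
    dsats w (M.map unshiftA) ↔ dsats (fun o => Option.elim o δ w) M := by
  constructor
  · intro h d hd
    rw [dsat_unshiftA w δ (hM d hd).1 (hM d hd).2]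
    exact h _ (List.mem_map_of_mem hd)
  · intro h d hd
    obtain ⟨d₀, h₀, rfl⟩ := List.mem_map.1 hd
    rw [← dsat_unshiftA w δ (hM d₀ h₀).1 (hM d₀ h₀).2]
    exact h _ h₀

lemma update_extOpt (w : X → ℝ) (a r : ℝ) :
    Function.update (fun o => Option.elim o a w) (none : Option X) r
      = fun o => Option.elim o r w := by
  funext o; cases o <;> simp [Function.update]

noncomputable def futureL [Fintype X] (L : List (DA X)) : List (DA (Option X)) :=
  L.map shiftA
  ++ (Finset.univ.toList.map fun x : X => ((some none, some (some x), false, 0) : DA (Option X)))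
  ++ [((none, some none, false, 0) : DA (Option X))]

noncomputable def futureD [Fintype X] (L : List (DA X)) : List (DA X) :=
  (elim (none : Option X) (futureL L)).map unshiftA

lemma dsats_nonnegL [Fintype X] (W : Option X → ℝ) :
    dsats W (Finset.univ.toList.map fun x : X =>
        ((some none, some (some x), false, 0) : DA (Option X)))
      ↔ ∀ x : X, W none ≤ W (some x) := by
  constructor
  · intro h x
    have := h _ (List.mem_map_of_mem (Finset.mem_toList.2 (Finset.mem_univ x)))
    simpa [dsat, ev] using this
  · intro h d hd
    obtain ⟨x, _, rfl⟩ := List.mem_map.1 hd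
    simpa [dsat, ev] using h x

lemma future_semD [Fintype X] (L : List (DA X)) : future (semD L) = semD (futureD L) := by
  ext w
  have hchar : w ∈ semD (futureD L) ↔
      ∃ r : ℝ, 0 ≤ r ∧ (∀ x, r ≤ (w x : ℝ)) ∧ dsats (fun x => (w x : ℝ) - r) L := by
    show dsats (co w) ((elim (none : Option X) (futureL L)).map unshiftA) ↔ _
    rw [dsats_unshift (co w) 0 (fun d hd => elim_free hd), elim_correct, ]
    constructor
    · rintro ⟨r, hr⟩
      rw [update_extOpt] at hr
      unfold futureL at hr
      rw [dsats_append, dsats_append] at hr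
      obtain ⟨⟨h1, h2⟩, h3⟩ := hr
      refine ⟨r, ?_, ?_, ?_⟩
      · have := h3 _ (List.mem_singleton.2 rfl)
        simpa [dsat, ev] using this
      · intro x
        exact (dsats_nonnegL _).1 h2 x
      · exact (dsats_map_shiftA _ _).1 h1
    · rintro ⟨r, h0, hle, hsat⟩
      refine ⟨r, ?_⟩
      rw [update_extOpt]
      unfold futureL
      rw [dsats_append, dsats_append]
      refine ⟨⟨(dsats_map_shiftA _ _).2 hsat, (dsats_nonnegL _).2 hle⟩, ?_⟩
      intro d hd
      rw [List.mem_singleton.1 hd]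
      simpa [dsat, ev] using h0
  constructor
  · rintro ⟨u, hu, δ, rfl⟩
    refine hchar.mpr ⟨(δ : ℝ), δ.coe_nonneg, ?_, ?_⟩
    · intro x
      show (δ : ℝ) ≤ ((u x + δ : NNReal) : ℝ)
      push_cast
      have := (u x).coe_nonneg
      linarith
    · have he : (fun x => (((addVal u δ) x : ℝ)) - (δ : ℝ)) = co u := by
        funext x
        show ((u x + δ : NNReal) : ℝ) - (δ : ℝ) = _
        push_cast
        simp [co]
      rw [he]
      exact hu
  · intro hw
    obtain ⟨r, h0, hle, hsat⟩ := hchar.mp hw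
    refine ⟨fun x => ⟨(w x : ℝ) - r, by linarith [hle x]⟩, hsat, ⟨r, h0⟩, ?_⟩
    funext x
    apply NNReal.coe_injective
    show (w x : ℝ) = ((_ + _ : NNReal) : ℝ)
    push_cast
    show (w x : ℝ) = ((w x : ℝ) - r) + r
    ring

noncomputable def resetD (x : X) (L : List (DA X)) : List (DA X) :=
  elim x (L ++ [((none, some x, false, 0) : DA X)]) ++ [((some x, none, false, 0) : DA X)]

lemma co_update (w : Val X) (x : X) (r : NNReal) :
    co (Function.update w x r) = Function.update (co w) x (r : ℝ) := by
  funext y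
  by_cases h : y = x
  · subst h; simp [co, Function.update]
  · simp [co, Function.update, h]

lemma resetSet_singleton_semD (x : X) (L : List (DA X)) :
    resetSet {x} (semD L) = semD (resetD x L) := by
  ext w
  have hchar : w ∈ semD (resetD x L) ↔
      (∃ r : ℝ, 0 ≤ r ∧ dsats (Function.update (co w) x r) L) ∧ (w x : ℝ) ≤ 0 := by
    show dsats (co w) _ ↔ _
    unfold resetD
    rw [dsats_append]
    constructor
    · rintro ⟨h1, h2⟩
      rw [elim_correct] at h1
      obtain ⟨r, hr⟩ := h1
      rw [dsats_append] at hr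
      refine ⟨⟨r, ?_, hr.1⟩, ?_⟩
      · have := hr.2 _ (List.mem_singleton.2 rfl)
        simpa [dsat, ev, Function.update] using this
      · have := h2 _ (List.mem_singleton.2 rfl)
        simpa [dsat, ev, co] using this
    · rintro ⟨⟨r, h0, hr⟩, hx⟩
      constructor
      · rw [elim_correct]
        refine ⟨r, ?_⟩
        rw [dsats_append]
        refine ⟨hr, ?_⟩
        intro d hd
        rw [List.mem_singleton.1 hd]
        simpa [dsat, ev, Function.update] using h0
      · intro d hd
        rw [List.mem_singleton.1 hd]
        simpa [dsat, ev, co] using hx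
  rw [hchar]
  constructor
  · rintro ⟨v, hv, rfl⟩
    have hrv : resetVal {x} v x = 0 := by simp [resetVal]
    refine ⟨⟨(v x : ℝ), (v x).coe_nonneg, ?_⟩, by simp [hrv]⟩
    have he : Function.update (co (resetVal {x} v)) x ((v x : ℝ)) = co v := by
      funext y
      by_cases h : y = x
      · subst h; simp [Function.update, co]
      · simp [Function.update, h, co, resetVal]
    rw [he]
    exact hv
  · rintro ⟨⟨r, h0, hr⟩, hx⟩
    have hwx : w x = 0 := by
      apply le_antisymm _ zero_le
      exact_mod_cast hx
    refine ⟨Function.update w x (⟨r, h0⟩ : NNReal), ?_, ?_⟩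
    · show dsats (co _) L
      have hco : co (Function.update w x ⟨r, h0⟩) = Function.update (co w) x r := co_update w x ⟨r, h0⟩
      rw [hco]
      exact hr
    · funext y
      by_cases h : y = x
      · subst h; simp [resetVal, hwx]
      · simp [resetVal, h, Function.update, Set.mem_singleton_iff]

end Ops

section Post
open Timed
variable {X : Type} [DecidableEq X] [Fintype X]

def Repr (S : Set (Val X)) : Prop := ∃ L : List (DA X), S = semD L

lemma repr_future {S : Set (Val X)} (h : Repr S) : Repr (future S) := by
  obtain ⟨L, rfl⟩ := h
  exact ⟨futureD L, future_semD L⟩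

lemma repr_inter_sem {S : Set (Val X)} (h : Repr S) (g : ClockConstraint X) :
    Repr (S ∩ sem g) := by
  obtain ⟨L, rfl⟩ := h
  refine ⟨L ++ ccToL g, ?_⟩
  ext v
  show v ∈ semD L ∧ v ∈ sem g ↔ dsats (co v) (L ++ ccToL g)
  rw [dsats_append, sem_eq_semD g]
  exact Iff.rfl

lemma resetVal_insert (a : X) (Y : Set X) (v : Val X) :
    resetVal (insert a Y) v = resetVal {a} (resetVal Y v) := by
  funext x
  by_cases h : x = a
  · subst h; simp [resetVal]
  · by_cases h2 : x ∈ Y <;> simp [resetVal, h, h2]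

lemma resetSet_insert (a : X) (Y : Set X) (S : Set (Val X)) :
    resetSet (insert a Y) S = resetSet {a} (resetSet Y S) := by
  unfold resetSet
  rw [← Set.image_comp]
  have : resetVal (insert a Y) = resetVal {a} ∘ resetVal Y := by
    funext v; exact resetVal_insert a Y v
  rw [this]

lemma resetSet_empty (S : Set (Val X)) : resetSet ∅ S = S := by
  have h : resetVal (∅ : Set X) = (id : Val X → Val X) := by
    funext v x; simp [resetVal]
  simp [resetSet, h]

lemma repr_resetSet (Y : Set X) {S : Set (Val X)} (h : Repr S) : Repr (resetSet Y S) := by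
  have hgen : ∀ F : Finset X, Repr (resetSet (↑F) S) := by
    intro F
    induction F using Finset.induction with
    | empty => rw [Finset.coe_empty, resetSet_empty]; exact h
    | insert _ _ hx ih =>
      rename_i a F'
      rw [Finset.coe_insert, resetSet_insert]
      obtain ⟨L, hL⟩ := ih
      rw [hL]
      exact ⟨resetD a L, resetSet_singleton_semD a L⟩
  have hY := Set.toFinite Y
  rw [← hY.coe_toFinset]
  exact hgen _

lemma Post_eq {Q : Type} (q q' : Q) (g : ClockConstraint X) (Y : Set X) (Z : Set (Val X)) :
    Post (q, g, Y, q') Z = future (resetSet Y (Z ∩ sem g)) := by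
  ext w
  constructor
  · rintro ⟨v, hv, δ, hg, rfl⟩
    exact ⟨resetVal Y v, ⟨v, ⟨hv, hg⟩, rfl⟩, δ, rfl⟩
  · rintro ⟨u, ⟨v, ⟨hv, hg⟩, rfl⟩, δ, rfl⟩
    exact ⟨v, hv, δ, hg, rfl⟩

lemma repr_Post {Q : Type} (q q' : Q) (g : ClockConstraint X) (Y : Set X)
    {Z : Set (Val X)} (h : Repr Z) : Repr (Post (q, g, Y, q') Z) := by
  rw [Post_eq]
  exact repr_future (repr_resetSet Y (repr_inter_sem h g))

lemma isZone_of_repr {S : Set (Val X)} (h : Repr S) (hne : S ≠ ∅) : IsZone S := by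
  obtain ⟨L, rfl⟩ := h
  exact isZone_semD hne

lemma repr_of_isZone {S : Set (Val X)} (h : IsZone S) : Repr S := by
  obtain ⟨g, rfl⟩ := h
  exact ⟨ccToL g, sem_eq_semD g⟩

lemma repr_zero : Repr ({zeroVal X} : Set (Val X)) := by
  refine ⟨Finset.univ.toList.map fun x : X => ((some x, none, false, 0) : DA X), ?_⟩
  ext v
  constructor
  · rintro rfl
    intro d hd
    obtain ⟨x, _, rfl⟩ := List.mem_map.1 hd
    simp [dsat, ev, co, zeroVal]
  · intro hv
    have : ∀ x : X, v x = 0 := by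
      intro x
      have := hv _ (List.mem_map_of_mem (Finset.mem_toList.2 (Finset.mem_univ x)))
      simp [dsat, ev, co] at this
      exact le_antisymm (by exact_mod_cast this) zero_le
    have : v = zeroVal X := by funext x; exact this x
    simp [this]

lemma repr_initZone : Repr (initZone X) := repr_future repr_zero

lemma addVal_zero (v : Val X) : addVal v 0 = v := by
  funext x; simp [addVal]

lemma addVal_addVal (v : Val X) (a b : NNReal) : addVal (addVal v a) b = addVal v (a + b) := by
  funext x; simp [addVal, add_assoc]

lemma initZone_nonempty : (initZone X) ≠ ∅ := by
  intro h
  have : zeroVal X ∈ initZone X := ⟨zeroVal X, rfl, 0, (addVal_zero _).symm⟩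
  rw [h] at this
  exact this

lemma Post_mono {Q : Type} (t : Q × ClockConstraint X × Set X × Q) {Z Z' : Set (Val X)}
    (h : Z ⊆ Z') : Post t Z ⊆ Post t Z' := by
  rintro w ⟨v, hv, δ, hg, rfl⟩
  exact ⟨v, h hv, δ, hg, rfl⟩

lemma symbReach_future_closed {Q : Type} (A : Automaton Q X) :
    ∀ c : Q × Set (Val X), SymbReach A c → ∀ v ∈ c.2, ∀ δ : NNReal, addVal v δ ∈ c.2 := by
  intro c h
  induction h with
  | init =>
    rintro v ⟨u, hu, δ₀, rfl⟩ δ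
    exact ⟨u, hu, δ₀ + δ, addVal_addVal u δ₀ δ⟩
  | step h ht hne ih =>
    rintro w ⟨v, hv, δ₀, hg, rfl⟩ δ
    exact ⟨v, hv, δ₀ + δ, hg, addVal_addVal _ δ₀ δ⟩

end Post

end ZP


/-- completeness is preserved by extrapolation. -/
theorem extrapolation_preserves_completeness {Q X : Type} [Fintype Q] [Fintype X]
    (A : Automaton Q X) (hT : A.trans.Finite)
    (extra : Q → Set (Val X) → Set (Val X))
    (hextra : ∀ (q : Q) (Z : Set (Val X)), IsZone Z → Z ≠ ∅ →
      IsZone (extra q Z) ∧ Z ⊆ extra q Z)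
    (N : Set (Q × Set (Val X))) (hNz : ∀ p ∈ N, IsZone p.2 ∧ p.2 ≠ ∅)
    (hN : ExtraSaturated A extra N) :
    (∀ (q : Q) (Z : Set (Val X)), SymbReach A (q, Z) →
      ∃ Z'', (q, Z'') ∈ N ∧ Z ⊆ Z'') ∧
    (∀ (q : Q) (v : Val X), Reachable A (q, v) →
      ∃ Z'', (q, Z'') ∈ N ∧ v ∈ Z'') := by
  classical
  have main : ∀ c : Q × Set (Val X), SymbReach A c →
      ZP.Repr c.2 ∧ c.2 ≠ ∅ ∧ ∃ Z'', (c.1, Z'') ∈ N ∧ c.2 ⊆ Z'' := by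
    intro c h
    induction h with
    | init =>
      refine ⟨ZP.repr_initZone, ZP.initZone_nonempty, ?_⟩
      obtain ⟨Z'', hZN, hsub⟩ := hN.1
      refine ⟨Z'', hZN, ?_⟩
      have hzone : IsZone (initZone X) :=
        ZP.isZone_of_repr ZP.repr_initZone ZP.initZone_nonempty
      exact Set.Subset.trans
        ((hextra A.init (initZone X) hzone ZP.initZone_nonempty).2) hsub
    | @step q Z g Y q' h ht hne ih =>
      obtain ⟨hrepr, hne₀, Z'', hZ''N, hsub⟩ := ih
      refine ⟨ZP.repr_Post (q := q) (q' := q') (g := g) (Y := Y) hrepr, hne, ?_⟩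
      obtain ⟨hZ''zone, hZ''ne⟩ := hNz _ hZ''N
      have hreprZ'' : ZP.Repr Z'' := ZP.repr_of_isZone hZ''zone
      have hmono : Post (q, g, Y, q') Z ⊆ Post (q, g, Y, q') Z'' :=
        ZP.Post_mono _ hsub
      have hPne : Post (q, g, Y, q') Z'' ≠ ∅ := by
        intro he
        exact hne (Set.subset_eq_empty hmono he ▸ rfl)
      have hPzone : IsZone (Post (q, g, Y, q') Z'') :=
        ZP.isZone_of_repr (ZP.repr_Post (q := q) (q' := q') (g := g) (Y := Y) hreprZ'') hPne
      obtain ⟨Z₃, hZ₃N, hext⟩ := hN.2 q Z'' hZ''N g Y q' ht hPne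
      refine ⟨Z₃, hZ₃N, ?_⟩
      have hsub2 : Post (q, g, Y, q') Z'' ⊆ extra q' (Post (q, g, Y, q') Z'') :=
        (hextra q' _ hPzone hPne).2
      exact fun w hw => hext (hsub2 (hmono hw))
  have reach : ∀ c : Q × Val X, Reachable A c →
      ∃ Z : Set (Val X), SymbReach A (c.1, Z) ∧ c.2 ∈ Z := by
    intro c h
    induction h with
    | refl =>
      exact ⟨initZone X, SymbReach.init,
        ⟨zeroVal X, rfl, 0, (ZP.addVal_zero _).symm⟩⟩
    | tail hab hbc ih =>
      obtain ⟨Z, hZ, hmem⟩ := ih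
      cases hbc with
      | delay q v δ =>
        exact ⟨Z, hZ, ZP.symbReach_future_closed A _ hZ _ hmem δ⟩
      | disc ht hg =>
        rename_i q v g R q₁
        have hmem' : resetVal R v ∈ Post (q, g, R, q₁) Z :=
          ⟨v, hmem, 0, hg, (ZP.addVal_zero _).symm⟩
        have hne : Post (q, g, R, q₁) Z ≠ ∅ := by
          intro he; rw [he] at hmem'; exact hmem'
        exact ⟨Post (q, g, R, q₁) Z, SymbReach.step hZ ht hne, hmem'⟩
  constructor
  · intro q Z h
    obtain ⟨_, _, Z'', hZN, hsub⟩ := main (q, Z) h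
    exact ⟨Z'', hZN, hsub⟩
  · intro q v h
    obtain ⟨Z, hZ, hmem⟩ := reach (q, v) h
    obtain ⟨_, _, Z'', hZN, hsub⟩ := main (q, Z) hZ
    exact ⟨Z'', hZN, hsub hmem⟩
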